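/- Let B̃ = (b_{kj}) be an m × n integer matrix whose top n × n submatrix is skew-symmetrizable, and let B̃' = μ_i(B̃) be the matrix obtained by matrix mutation at index i ∈ [n], defined by b'_{kj} = −b_{kj} if k = i or j = i, and b'_{kj} = b_{kj} + (|b_{ki}|·b_{ij} + b_{ki}·|b_{ij}|)/2 otherwise. If every column of B̃ is a primitive integer vector, then every column of B̃' is a primitive integer vector. -/
import Mathlib

lemma aux_dvd (a c : ℤ) : c ∣ (|a| * c + a * |c|) / 2 := by
  obtain ⟨y, hy, hd⟩ : ∃ y, |a| * c + a * |c| = 2 * y ∧ c ∣ y := by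
    rcases abs_cases a with ⟨ha, _⟩ | ⟨ha, _⟩ <;> rcases abs_cases c with ⟨hc, _⟩ | ⟨hc, _⟩
    · exact ⟨a * c, by rw [ha, hc]; ring, dvd_mul_left _ _⟩
    · exact ⟨0, by rw [ha, hc]; ring, dvd_zero _⟩
    · exact ⟨0, by rw [ha, hc]; ring, dvd_zero _⟩
    · exact ⟨-(a * c), by rw [ha, hc]; ring, dvd_neg.mpr (dvd_mul_left _ _)⟩
  rw [hy, Int.mul_ediv_cancel_left _ two_ne_zero]
  exact hd

/-- Matrix mutation preserves primitivity of columns: if `B̃` is an `m × n` integer matrix whose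
top `n × n` submatrix is skew-symmetrizable and all of whose columns are primitive (gcd of the
entries equal to 1), then all columns of the mutated matrix `μ_i(B̃)` are primitive. -/
theorem stmt4 {m n : ℕ} (hmn : n ≤ m) (B : Matrix (Fin m) (Fin n) ℤ) (i : Fin n)
    (D : Fin n → ℤ) (hD : ∀ k, 0 < D k)
    (hskew : ∀ k j : Fin n, D k * B (Fin.castLE hmn k) j = - (D j * B (Fin.castLE hmn j) k))
    (hprim : ∀ j : Fin n, Finset.gcd Finset.univ (fun k => B k j) = 1) :
    ∀ j : Fin n, Finset.gcd Finset.univ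
      (fun k : Fin m => if k = Fin.castLE hmn i ∨ j = i then - B k j
        else B k j + (|B k i| * B (Fin.castLE hmn i) j + B k i * |B (Fin.castLE hmn i) j|) / 2)
      = 1 := by
  intro j
  set f : Fin m → ℤ := fun k : Fin m => if k = Fin.castLE hmn i ∨ j = i then - B k j
    else B k j + (|B k i| * B (Fin.castLE hmn i) j + B k i * |B (Fin.castLE hmn i) j|) / 2
    with hf
  set g : ℤ := Finset.gcd Finset.univ f with hg
  have hgnonneg : 0 ≤ g := by
    rw [hg, ← Finset.normalize_gcd, ← Int.abs_eq_normalize]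
    exact abs_nonneg _
  have hkey : ∀ k : Fin m, g ∣ B k j := by
    by_cases hj : j = i
    · intro k
      have h1 : g ∣ f k := Finset.gcd_dvd (Finset.mem_univ k)
      have hfk : f k = - B k j := by rw [hf]; simp [hj]
      rw [hfk] at h1
      exact dvd_neg.mp h1
    · have hc : g ∣ B (Fin.castLE hmn i) j := by
        have h1 : g ∣ f (Fin.castLE hmn i) := Finset.gcd_dvd (Finset.mem_univ _)
        have hfk : f (Fin.castLE hmn i) = - B (Fin.castLE hmn i) j := by rw [hf]; simp
        rw [hfk] at h1
        exact dvd_neg.mp h1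
      intro k
      by_cases hk : k = Fin.castLE hmn i
      · rw [hk]; exact hc
      · have hfk : f k = B k j +
            (|B k i| * B (Fin.castLE hmn i) j + B k i * |B (Fin.castLE hmn i) j|) / 2 := by
          rw [hf]; simp [hk, hj]
        have h1 : g ∣ f k := Finset.gcd_dvd (Finset.mem_univ k)
        have h2 : g ∣ (|B k i| * B (Fin.castLE hmn i) j + B k i * |B (Fin.castLE hmn i) j|) / 2 :=
          hc.trans (aux_dvd _ _)
        rw [hfk] at h1
        have := dvd_sub h1 h2
        simpa using this
  have hd1 : g ∣ 1 := by
    rw [← hprim j]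
    exact Finset.dvd_gcd fun k _ => hkey k
  exact Int.eq_one_of_dvd_one hgnonneg hd1
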